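/- F(S¹) is isometric to E(S¹). Explicitly, the map sending f ∈ F(S¹) to f̃ : S¹ → ℝ, defined by f̃(θ) = f(θ) for θ ∈ [0,π] and f̃(θ) = π − f(θ−π) for θ ∈ (π,2π), is a well-defined surjective isometry from F(S¹) onto E(S¹). -/

import Mathlib

noncomputable section

/-- The circle `ℝ/2πℤ` with the quotient metric (geodesic metric, circumference `2π`). -/
abbrev S1 : Type := AddCircle (2 * Real.pi)

instance : Fact (0 < 2 * Real.pi) := ⟨by positivity⟩

/-- The tight span of `S¹`: 1-Lipschitz functions with `f θ + f (θ + π) = π`. -/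
def ES1 : Set (S1 → ℝ) :=
  {f | LipschitzWith 1 f ∧ ∀ θ : S1, f θ + f (θ + ((Real.pi : ℝ) : S1)) = Real.pi}

/-- The reduced tight span `F(S¹)`: 1-Lipschitz functions on `[0, π]`
with `f 0 + f π = π`. -/
def FS1 : Set (Set.Icc (0 : ℝ) Real.pi → ℝ) :=
  {f | LipschitzWith 1 f ∧
    f ⟨0, Set.left_mem_Icc.2 Real.pi_pos.le⟩ +
      f ⟨Real.pi, Set.right_mem_Icc.2 Real.pi_pos.le⟩ = Real.pi}

/-- The extension `f̃` of `f : [0,π] → ℝ` to `S¹`, given by `f̃ θ = f θ` for `θ ∈ [0,π]`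
and `f̃ θ = π − f (θ − π)` for `θ ∈ (π, 2π)`. -/
def tilde (f : Set.Icc (0 : ℝ) Real.pi → ℝ) : S1 → ℝ := fun θ =>
  let u := AddCircle.equivIco (2 * Real.pi) 0 θ
  if h : (u : ℝ) ≤ Real.pi then f ⟨(u : ℝ), u.2.1, h⟩
  else Real.pi - f ⟨(u : ℝ) - Real.pi, by
    have h1 : Real.pi < (u : ℝ) := not_le.mp h
    have h2 : (u : ℝ) < 0 + 2 * Real.pi := u.2.2
    constructor <;> [linarith; linarith]⟩

/-! ### Auxiliary lemmas -/

/-- The canonical representative of `θ : S¹` in `[0, 2π)`. -/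
def rep (θ : S1) : ℝ := (AddCircle.equivIco (2 * Real.pi) 0 θ : ℝ)

lemma rep_mem (θ : S1) : rep θ ∈ Set.Ico (0:ℝ) (0 + 2 * Real.pi) :=
  (AddCircle.equivIco (2 * Real.pi) 0 θ).2

lemma coe_rep (θ : S1) : ((rep θ : ℝ) : S1) = θ :=
  (AddCircle.equivIco (2 * Real.pi) 0).symm_apply_apply θ

lemma rep_coe {x : ℝ} (hx : x ∈ Set.Ico (0:ℝ) (0 + 2 * Real.pi)) : rep ((x : ℝ) : S1) = x := by
  have h2 : (0:ℝ) < 2 * Real.pi := by positivity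
  show ((QuotientAddGroup.equivIcoMod h2 0 (x : S1) : ℝ)) = x
  rw [QuotientAddGroup.equivIcoMod_coe]
  exact (toIcoMod_eq_self h2).mpr hx

lemma mem_indic {θ : S1} (h : rep θ ≤ Real.pi) : rep θ ∈ Set.Icc (0:ℝ) Real.pi :=
  ⟨(rep_mem θ).1, h⟩

lemma mem_indic' {θ : S1} (h : ¬ rep θ ≤ Real.pi) : rep θ - Real.pi ∈ Set.Icc (0:ℝ) Real.pi := by
  have h1 := not_le.mp h
  have h2 := (rep_mem θ).2
  constructor <;> [linarith; linarith]

lemma tilde_of_le (f : Set.Icc (0 : ℝ) Real.pi → ℝ) {θ : S1} (h : rep θ ≤ Real.pi) :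
    tilde f θ = f ⟨rep θ, mem_indic h⟩ :=
  dif_pos h

lemma tilde_of_gt (f : Set.Icc (0 : ℝ) Real.pi → ℝ) {θ : S1} (h : ¬ rep θ ≤ Real.pi) :
    tilde f θ = Real.pi - f ⟨rep θ - Real.pi, mem_indic' h⟩ :=
  dif_neg h

lemma fcong (f : Set.Icc (0 : ℝ) Real.pi → ℝ) {a b : ℝ}
    (pa : a ∈ Set.Icc (0:ℝ) Real.pi) (pb : b ∈ Set.Icc (0:ℝ) Real.pi) (h : a = b) :
    f ⟨a, pa⟩ = f ⟨b, pb⟩ := by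
  subst h; rfl

lemma min_le_norm (t : ℝ) : min |t| (2 * Real.pi - |t|) ≤ ‖(t : S1)‖ := by
  rw [AddCircle.norm_eq]
  set k := round ((2 * Real.pi)⁻¹ * t) with hk
  rcases eq_or_ne k 0 with h | h
  · simpa [h] using min_le_left |t| (2 * Real.pi - |t|)
  · have h1 : (1:ℝ) ≤ |(k:ℝ)| := by exact_mod_cast Int.one_le_abs h
    refine le_trans (min_le_right _ _) ?_
    have h2 : |(k:ℝ) * (2 * Real.pi)| - |t| ≤ |t - k * (2 * Real.pi)| := by
      rw [abs_sub_comm]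
      exact abs_sub_abs_le_abs_sub _ _
    have h3 : |(k:ℝ) * (2 * Real.pi)| = |(k:ℝ)| * (2 * Real.pi) := by
      rw [abs_mul]
      congr 1
      exact abs_of_pos (by positivity)
    nlinarith [Real.pi_pos]

lemma dist_ge (θ θ' : S1) :
    min |rep θ - rep θ'| (2 * Real.pi - |rep θ - rep θ'|) ≤ dist θ θ' := by
  rw [dist_eq_norm]
  have h : θ - θ' = ((rep θ - rep θ' : ℝ) : S1) := by
    conv_lhs => rw [← coe_rep θ, ← coe_rep θ']
    rfl
  rw [h]
  exact min_le_norm _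

lemma lip_val {f : Set.Icc (0 : ℝ) Real.pi → ℝ} (hL : LipschitzWith 1 f)
    (x y : Set.Icc (0:ℝ) Real.pi) : |f x - f y| ≤ |(x:ℝ) - (y:ℝ)| := by
  have := hL.dist_le_mul x y
  simpa [Subtype.dist_eq, Real.dist_eq] using this

lemma rep_add_pi_of_lt {θ : S1} (h : rep θ < Real.pi) :
    rep (θ + ((Real.pi : ℝ) : S1)) = rep θ + Real.pi := by
  have h1 : θ + ((Real.pi : ℝ) : S1) = ((rep θ + Real.pi : ℝ) : S1) := by
    conv_lhs => rw [← coe_rep θ]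
    rfl
  rw [h1]
  refine rep_coe ⟨by linarith [(rep_mem θ).1, Real.pi_pos], by linarith⟩

lemma rep_add_pi_of_ge {θ : S1} (h : Real.pi ≤ rep θ) :
    rep (θ + ((Real.pi : ℝ) : S1)) = rep θ - Real.pi := by
  have h1 : θ + ((Real.pi : ℝ) : S1) = (((rep θ - Real.pi) + 2 * Real.pi : ℝ) : S1) := by
    conv_lhs => rw [← coe_rep θ]
    show ((rep θ + Real.pi : ℝ) : S1) = _
    congr 1
    ring
  rw [h1, AddCircle.coe_add_period]
  refine rep_coe ⟨by linarith, by linarith [(rep_mem θ).2]⟩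

/-- The key mixed-case estimate. -/
lemma mixed_bound {f : Set.Icc (0 : ℝ) Real.pi → ℝ} (hf : f ∈ FS1) {θ θ' : S1}
    (h : rep θ ≤ Real.pi) (h' : ¬ rep θ' ≤ Real.pi) :
    |tilde f θ - tilde f θ'| ≤ min |rep θ - rep θ'| (2 * Real.pi - |rep θ - rep θ'|) := by
  have hL : LipschitzWith 1 f := hf.1
  have hsum : f ⟨0, Set.left_mem_Icc.2 Real.pi_pos.le⟩ +
      f ⟨Real.pi, Set.right_mem_Icc.2 Real.pi_pos.le⟩ = Real.pi := hf.2
  rw [tilde_of_le f h, tilde_of_gt f h']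
  set a : Set.Icc (0:ℝ) Real.pi := ⟨rep θ, mem_indic h⟩ with ha
  set b : Set.Icc (0:ℝ) Real.pi := ⟨rep θ' - Real.pi, mem_indic' h'⟩ with hb
  have hlt : Real.pi < rep θ' := not_le.mp h'
  have k1 := abs_le.mp (lip_val hL a ⟨0, Set.left_mem_Icc.2 Real.pi_pos.le⟩)
  have k2 := abs_le.mp (lip_val hL a ⟨Real.pi, Set.right_mem_Icc.2 Real.pi_pos.le⟩)
  have k3 := abs_le.mp (lip_val hL b ⟨0, Set.left_mem_Icc.2 Real.pi_pos.le⟩)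
  have k4 := abs_le.mp (lip_val hL b ⟨Real.pi, Set.right_mem_Icc.2 Real.pi_pos.le⟩)
  have r1 : |((a : ℝ)) - ((⟨0, Set.left_mem_Icc.2 Real.pi_pos.le⟩ :
      Set.Icc (0:ℝ) Real.pi) : ℝ)| = rep θ := by
    show |rep θ - 0| = rep θ
    rw [sub_zero]
    exact abs_of_nonneg (rep_mem θ).1
  have r2 : |((a : ℝ)) - ((⟨Real.pi, Set.right_mem_Icc.2 Real.pi_pos.le⟩ :
      Set.Icc (0:ℝ) Real.pi) : ℝ)| = Real.pi - rep θ := by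
    show |rep θ - Real.pi| = Real.pi - rep θ
    rw [abs_sub_comm]
    exact abs_of_nonneg (by linarith)
  have r3 : |((b : ℝ)) - ((⟨0, Set.left_mem_Icc.2 Real.pi_pos.le⟩ :
      Set.Icc (0:ℝ) Real.pi) : ℝ)| = rep θ' - Real.pi := by
    show |rep θ' - Real.pi - 0| = rep θ' - Real.pi
    rw [sub_zero]
    exact abs_of_nonneg (by linarith)
  have r4 : |((b : ℝ)) - ((⟨Real.pi, Set.right_mem_Icc.2 Real.pi_pos.le⟩ :
      Set.Icc (0:ℝ) Real.pi) : ℝ)| = 2 * Real.pi - rep θ' := by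
    show |rep θ' - Real.pi - Real.pi| = 2 * Real.pi - rep θ'
    rw [abs_sub_comm, show Real.pi - (rep θ' - Real.pi) = 2 * Real.pi - rep θ' by ring]
    exact abs_of_nonneg (by linarith [(rep_mem θ').2])
  rw [r1] at k1
  rw [r2] at k2
  rw [r3] at k3
  rw [r4] at k4
  have habs : |rep θ - rep θ'| = rep θ' - rep θ := by
    rw [abs_sub_comm]
    exact abs_of_nonneg (by linarith)
  rw [habs]
  exact le_min (abs_le.mpr ⟨by linarith, by linarith⟩)
    (abs_le.mpr ⟨by linarith, by linarith⟩)

lemma tilde_lip {f : Set.Icc (0 : ℝ) Real.pi → ℝ} (hf : f ∈ FS1) :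
    LipschitzWith 1 (tilde f) := by
  rw [lipschitzWith_iff_dist_le_mul]
  intro θ θ'
  simp only [NNReal.coe_one, one_mul, Real.dist_eq]
  refine le_trans ?_ (dist_ge θ θ')
  by_cases h : rep θ ≤ Real.pi <;> by_cases h' : rep θ' ≤ Real.pi
  · rw [tilde_of_le f h, tilde_of_le f h']
    refine le_trans (lip_val hf.1 _ _) (le_min le_rfl ?_)
    simp only
    rcases abs_sub_le_iff.mp (le_refl |rep θ - rep θ'|) with ⟨_, _⟩
    have := abs_sub_le_iff.mpr ⟨sub_le_iff_le_add.mpr (by linarith [(rep_mem θ).1, (rep_mem θ').1] :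
      rep θ ≤ Real.pi + rep θ'), by linarith [(rep_mem θ).1, (rep_mem θ').1]⟩
    linarith [Real.pi_pos]
  · exact mixed_bound hf h h'
  · rw [abs_sub_comm, abs_sub_comm (rep θ)]
    exact mixed_bound hf h' h
  · rw [tilde_of_gt f h, tilde_of_gt f h']
    have e : Real.pi - f ⟨rep θ - Real.pi, mem_indic' h⟩ -
        (Real.pi - f ⟨rep θ' - Real.pi, mem_indic' h'⟩) =
        f ⟨rep θ' - Real.pi, mem_indic' h'⟩ - f ⟨rep θ - Real.pi, mem_indic' h⟩ := by ring
    rw [e]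
    refine le_trans (lip_val hf.1 _ _) ?_
    have e2 : |((⟨rep θ' - Real.pi, mem_indic' h'⟩ : Set.Icc (0:ℝ) Real.pi) : ℝ) -
        ((⟨rep θ - Real.pi, mem_indic' h⟩ : Set.Icc (0:ℝ) Real.pi) : ℝ)| = |rep θ - rep θ'| := by
      rw [abs_sub_comm]
      congr 1
      simp only
      ring
    rw [e2]
    refine le_min le_rfl ?_
    have h1 := not_le.mp h
    have h2 := not_le.mp h'
    rcases abs_sub_le_iff.mp (le_refl |rep θ - rep θ'|) with ⟨_, _⟩
    have : |rep θ - rep θ'| ≤ Real.pi := by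
      rw [abs_sub_le_iff]
      constructor <;> linarith [(rep_mem θ).2, (rep_mem θ').2]
    linarith

lemma tilde_antipode {f : Set.Icc (0 : ℝ) Real.pi → ℝ} (hf : f ∈ FS1) (θ : S1) :
    tilde f θ + tilde f (θ + ((Real.pi : ℝ) : S1)) = Real.pi := by
  have hsum : f ⟨0, Set.left_mem_Icc.2 Real.pi_pos.le⟩ +
      f ⟨Real.pi, Set.right_mem_Icc.2 Real.pi_pos.le⟩ = Real.pi := hf.2
  rcases lt_or_ge (rep θ) Real.pi with h | h
  · have h2 := rep_add_pi_of_lt h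
    by_cases h3 : rep (θ + ((Real.pi : ℝ) : S1)) ≤ Real.pi
    · have h4 : rep θ = 0 := le_antisymm (by rw [h2] at h3; linarith) (rep_mem θ).1
      rw [tilde_of_le f h.le, tilde_of_le f h3,
        fcong f (mem_indic h.le) (Set.left_mem_Icc.2 Real.pi_pos.le) h4,
        fcong f (mem_indic h3) (Set.right_mem_Icc.2 Real.pi_pos.le)
          (show rep (θ + ((Real.pi : ℝ) : S1)) = Real.pi by rw [h2, h4]; ring)]
      exact hsum
    · rw [tilde_of_le f h.le, tilde_of_gt f h3,
        fcong f (mem_indic' h3) (mem_indic h.le)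
          (show rep (θ + ((Real.pi : ℝ) : S1)) - Real.pi = rep θ by rw [h2]; ring)]
      ring
  · have h2 := rep_add_pi_of_ge h
    have h3 : rep (θ + ((Real.pi : ℝ) : S1)) ≤ Real.pi := by
      rw [h2]; linarith [(rep_mem θ).2]
    rcases eq_or_lt_of_le h with h4 | h4
    · rw [tilde_of_le f h4.ge, tilde_of_le f h3,
        fcong f (mem_indic h4.ge) (Set.right_mem_Icc.2 Real.pi_pos.le) h4.symm,
        fcong f (mem_indic h3) (Set.left_mem_Icc.2 Real.pi_pos.le)
          (show rep (θ + ((Real.pi : ℝ) : S1)) = 0 by rw [h2, ← h4]; ring)]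
      linarith
    · have h5 : ¬ rep θ ≤ Real.pi := not_le.mpr h4
      rw [tilde_of_gt f h5, tilde_of_le f h3,
        fcong f (mem_indic h3) (mem_indic' h5)
          (show rep (θ + ((Real.pi : ℝ) : S1)) = rep θ - Real.pi from h2)]
      ring

lemma range_tilde_eq (f g : Set.Icc (0 : ℝ) Real.pi → ℝ) :
    Set.range (fun θ : S1 => |tilde f θ - tilde g θ|) =
      Set.range (fun x : Set.Icc (0:ℝ) Real.pi => |f x - g x|) := by
  ext r
  constructor
  · rintro ⟨θ, rfl⟩
    by_cases h : rep θ ≤ Real.pi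
    · exact ⟨⟨rep θ, mem_indic h⟩, by simp only [tilde_of_le f h, tilde_of_le g h]⟩
    · refine ⟨⟨rep θ - Real.pi, mem_indic' h⟩, ?_⟩
      simp only [tilde_of_gt f h, tilde_of_gt g h]
      rw [abs_sub_comm]
      congr 1
      ring
  · rintro ⟨x, rfl⟩
    refine ⟨((x : ℝ) : S1), ?_⟩
    have hx : rep ((x : ℝ) : S1) = (x : ℝ) :=
      rep_coe ⟨x.2.1, by linarith [x.2.2, Real.pi_pos]⟩
    have h : rep ((x : ℝ) : S1) ≤ Real.pi := by rw [hx]; exact x.2.2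
    have hx' : (⟨rep ((x : ℝ) : S1), mem_indic h⟩ : Set.Icc (0:ℝ) Real.pi) = x :=
      Subtype.ext hx
    simp only [tilde_of_le f h, tilde_of_le g h, hx']

/-- `F(S¹)` is isometric to `E(S¹)` via `f ↦ f̃`: the map is well defined,
surjective onto `E(S¹)`, and preserves sup distances. -/
theorem FS1_isometric_ES1 :
    (∀ f ∈ FS1, tilde f ∈ ES1) ∧
    (∀ g ∈ ES1, ∃ f ∈ FS1, tilde f = g) ∧
    (∀ f ∈ FS1, ∀ g ∈ FS1,
      (⨆ θ : S1, |tilde f θ - tilde g θ|) = ⨆ x : Set.Icc (0 : ℝ) Real.pi, |f x - g x|) := by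
  refine ⟨fun f hf => ⟨tilde_lip hf, tilde_antipode hf⟩, ?_, ?_⟩
  · rintro g ⟨hL, hsum⟩
    have hcoe : LipschitzWith 1 (fun x : Set.Icc (0:ℝ) Real.pi => ((x : ℝ) : S1)) := by
      have h1 : LipschitzWith 1 (fun x : ℝ => (x : S1)) := by
        rw [lipschitzWith_iff_dist_le_mul]
        intro x y
        simp only [NNReal.coe_one, one_mul]
        rw [dist_eq_norm, Real.dist_eq]
        have : (x : S1) - (y : S1) = ((x - y : ℝ) : S1) := rfl
        rw [this]
        exact QuotientAddGroup.norm_mk_le_norm (S := AddSubgroup.zmultiples (2 * Real.pi)) (m := x - y)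
      simpa [Function.comp_def] using h1.comp (LipschitzWith.subtype_val _)
    refine ⟨fun x => g ((x : ℝ) : S1), ⟨by simpa [Function.comp_def] using hL.comp hcoe, ?_⟩, ?_⟩
    · have := hsum (((0:ℝ) : S1))
      simpa using this
    · funext θ
      by_cases h : rep θ ≤ Real.pi
      · rw [tilde_of_le _ h]
        show g ((rep θ : ℝ) : S1) = g θ
        rw [coe_rep]
      · rw [tilde_of_gt _ h]
        show Real.pi - g (((rep θ - Real.pi : ℝ)) : S1) = g θ
        have hs := hsum (((rep θ - Real.pi : ℝ)) : S1)
        have he : (((rep θ - Real.pi : ℝ)) : S1) + ((Real.pi : ℝ) : S1) = θ := by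
          have : (((rep θ - Real.pi : ℝ)) : S1) + ((Real.pi : ℝ) : S1)
              = ((rep θ : ℝ) : S1) := by
            rw [show ((rep θ : ℝ) : S1) = (((rep θ - Real.pi) + Real.pi : ℝ) : S1) by
              norm_num]
            rfl
          rw [this, coe_rep]
        rw [he] at hs
        linarith
  · intro f _ g _
    rw [← sSup_range, ← sSup_range, range_tilde_eq]

end
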